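/- arXiv:1807.00481 — 2 statements merged into one kernel-verified Lean document; each statement's English description precedes it below -/
import Mathlib

section
/- Let n ≥ 1 and let J and A be perfect matchings of Fin (2n). Let s and t be points of Fin (2n) lying in different orbits of the subgroup ⟨J, A⟩ generated by J and A (different connected components of the graph J ∪ A), and let A' = (s t) A (s t). Then the orbits of ⟨J, A'⟩ on Fin (2n) are exactly: the orbits of ⟨J, A⟩ other than those containing s and t, together with the union of the two orbits of ⟨J, A⟩ containing s and t. In particular, d(J, A') is obtained from d(J, A) by replacing the two parts equal to the sizes of the orbits of s and t by a single part equal to their sum. -/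
/-- The multiset of cardinalities of the orbits of a subgroup of permutations
acting on a finite type. -/
noncomputable def orbitSizes {α : Type*} [Fintype α] (G : Subgroup (Equiv.Perm α)) :
    Multiset ℕ :=
  letI : Fintype (Quotient (MulAction.orbitRel G α)) := Fintype.ofFinite _
  (Finset.univ : Finset (Quotient (MulAction.orbitRel G α))).val.map
    fun q => Nat.card (MulAction.orbit G q.out)

/-- `d(A,B)`. -/
noncomputable def dMatch {N : ℕ} (A B : Equiv.Perm (Fin N)) : Multiset ℕ :=
  orbitSizes (Subgroup.closure {A, B})

/-- Doubling every part of a partition (as a multiset). -/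
def twice (m : Multiset ℕ) : Multiset ℕ := m.map (fun i => 2 * i)

/-- Perfect matchings of the complete graph on `Fin N`. -/
abbrev PerfMatching (N : ℕ) := {A : Equiv.Perm (Fin N) // A * A = 1 ∧ ∀ x, A x ≠ x}


open MulAction Subgroup Equiv

namespace MatchSwapAux

set_option linter.unusedSectionVars false

variable {α : Type*} [Fintype α] [DecidableEq α]

lemma apply_mem_orbit {K : Subgroup (Equiv.Perm α)} {g : Equiv.Perm α} (hg : g ∈ K)
    {x y : α} (hy : y ∈ orbit K x) : g y ∈ orbit K x := by
  obtain ⟨k, rfl⟩ := hy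
  exact ⟨⟨g, hg⟩ * k, rfl⟩

lemma orbit_subset_of_closed {J B : Equiv.Perm α} (hJ : J * J = 1) (hB : B * B = 1)
    {S : Set α} (hJS : ∀ y ∈ S, J y ∈ S) (hBS : ∀ y ∈ S, B y ∈ S)
    {x : α} (hx : x ∈ S) : orbit (closure {J, B}) x ⊆ S := by
  have key : ∀ g ∈ closure {J, B}, (∀ y ∈ S, g y ∈ S) ∧ (∀ y ∈ S, g⁻¹ y ∈ S) := by
    intro g hg
    induction hg using closure_induction with
    | mem z hz =>
        have hz2 : z * z = 1 := by rcases hz with rfl | rfl <;> assumption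
        have hzi : z⁻¹ = z := inv_eq_of_mul_eq_one_left hz2
        have hzS : ∀ y ∈ S, z y ∈ S := by rcases hz with rfl | rfl <;> assumption
        exact ⟨hzS, by rw [hzi]; exact hzS⟩
    | one => simp
    | mul a b ha hb iha ihb =>
        refine ⟨fun y hy => ?_, fun y hy => ?_⟩
        · rw [Equiv.Perm.mul_apply]; exact iha.1 _ (ihb.1 _ hy)
        · rw [mul_inv_rev, Equiv.Perm.mul_apply]; exact ihb.2 _ (iha.2 _ hy)
    | inv a ha iha => exact ⟨iha.2, by rw [inv_inv]; exact iha.1⟩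
  rintro _ ⟨⟨g, hg⟩, rfl⟩
  exact (key g hg).1 x hx

lemma not_adj_in_cycle {J A : Equiv.Perm α} (hJ1 : J * J = 1) (hJf : ∀ x, J x ≠ x)
    (hA1 : A * A = 1) (hAf : ∀ x, A x ≠ x) (x : α) :
    A x ∉ orbit (zpowers (A * J)) x := by
  intro h
  obtain ⟨⟨g, hg⟩, hgx⟩ := h
  obtain ⟨i, rfl⟩ := mem_zpowers_iff.mp hg
  set c := A * J with hc
  have hgx' : (c ^ i) x = A x := hgx
  have hAinv : A⁻¹ = A := inv_eq_of_mul_eq_one_left hA1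
  have hJinv : J⁻¹ = J := inv_eq_of_mul_eq_one_left hJ1
  have hconj : ∀ j : ℤ, A * c ^ j = c ^ (-j) * A := by
    intro j
    have h1 : A * c * A⁻¹ = c⁻¹ := by
      rw [hAinv, hc, mul_inv_rev, hJinv, hAinv, ← mul_assoc A A J, hA1, one_mul]
    have h2 : (A * c * A⁻¹) ^ j = A * c ^ j * A⁻¹ := conj_zpow
    rw [h1] at h2
    have h3 : A * c ^ j = c⁻¹ ^ j * A := by
      rw [h2, mul_assoc, hAinv, hA1, mul_one]
    rw [h3, inv_zpow, zpow_neg]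
  have keyA : ∀ j : ℤ, (c ^ (i - j)) x ≠ (c ^ j) x := by
    intro j hj
    apply hAf ((c ^ j) x)
    have : A ((c ^ j) x) = (c ^ (i - j)) x := by
      rw [← Equiv.Perm.mul_apply, hconj j, Equiv.Perm.mul_apply, ← hgx',
        ← Equiv.Perm.mul_apply, ← zpow_add, show -j + i = i - j from by ring]
    rw [this, hj]
  have keyJ : ∀ j : ℤ, (c ^ (i - j - 1)) x ≠ (c ^ j) x := by
    intro j hj
    apply hJf ((c ^ j) x)
    have hJA : J = A * c := by rw [hc, ← mul_assoc, hA1, one_mul]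
    have : J ((c ^ j) x) = (c ^ (i - j - 1)) x := by
      rw [hJA, ← Equiv.Perm.mul_apply, mul_assoc,
        show c * c ^ j = c ^ (1 + j) from by rw [← zpow_one_add],
        hconj (1 + j), Equiv.Perm.mul_apply, ← hgx', ← Equiv.Perm.mul_apply, ← zpow_add,
        show -(1 + j) + i = i - j - 1 from by ring]
    rw [this, hj]
  rcases Int.even_or_odd i with ⟨j, hj⟩ | ⟨j, hj⟩
  · exact keyA j (by rw [show i - j = j by omega])
  · exact keyJ j (by rw [show i - j - 1 = j by omega])


noncomputable def orbFinset (G : Subgroup (Equiv.Perm α)) : Finset (Set α) :=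
  letI : Fintype (Quotient (orbitRel G α)) := Fintype.ofFinite _
  letI := Classical.decEq (Set α)
  Finset.univ.image fun q : Quotient (orbitRel G α) => (orbit G q.out : Set α)

lemma mem_orbFinset {G : Subgroup (Equiv.Perm α)} {S : Set α} :
    S ∈ orbFinset G ↔ ∃ x, S = orbit G x := by
  letI : Fintype (Quotient (orbitRel G α)) := Fintype.ofFinite _
  letI := Classical.decEq (Set α)
  unfold orbFinset
  rw [Finset.mem_image]
  constructor
  · rintro ⟨q, -, rfl⟩; exact ⟨q.out, rfl⟩
  · rintro ⟨x, rfl⟩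
    refine ⟨Quotient.mk (orbitRel G α) x, Finset.mem_univ _, ?_⟩
    exact orbit_eq_iff.mpr (orbitRel_apply.mp (Quotient.mk_out x))

lemma orbitSizes_eq (G : Subgroup (Equiv.Perm α)) :
    orbitSizes G = (orbFinset G).val.map (fun S : Set α => Nat.card S) := by
  letI : Fintype (Quotient (orbitRel G α)) := Fintype.ofFinite _
  letI := Classical.decEq (Set α)
  unfold orbitSizes orbFinset
  have hinj : Set.InjOn (fun q : Quotient (orbitRel G α) => (orbit G q.out : Set α))
      ↑(Finset.univ : Finset (Quotient (orbitRel G α))) := by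
    intro q _ q' _ h
    simp only at h
    refine Quotient.out_equiv_out.mp (orbitRel_apply.mpr ?_)
    exact h ▸ mem_orbit_self q.out
  rw [Finset.image_val_of_injOn hinj, Multiset.map_map]
  rfl


lemma main_orbits (J A : Equiv.Perm α) (hJ1 : J * J = 1) (hJf : ∀ x, J x ≠ x)
    (hA1 : A * A = 1) (hAf : ∀ x, A x ≠ x) (s t : α)
    (hst : s ∉ orbit (closure {J, A}) t) :
    {S : Set α | ∃ x, S = orbit (closure {J, swap s t * A * swap s t}) x} =
      ({S : Set α | ∃ x, S = orbit (closure {J, A}) x} \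
        {orbit (closure {J, A}) s, orbit (closure {J, A}) t}) ∪
      {orbit (closure {J, A}) s ∪ orbit (closure {J, A}) t} := by
  set σ := swap s t with hσdef
  set A' := σ * A * σ with hA'def
  set G := closure {J, A} with hGdef
  set G' := closure {J, A'} with hG'def
  have hJG : J ∈ G := subset_closure (Set.mem_insert _ _)
  have hAG : A ∈ G := subset_closure (Set.mem_insert_of_mem _ rfl)
  have hJG' : J ∈ G' := subset_closure (Set.mem_insert _ _)
  have hA'G' : A' ∈ G' := subset_closure (Set.mem_insert_of_mem _ rfl)
  have hs_ne_t : s ≠ t := fun h => hst (by rw [h]; exact mem_orbit_self t)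
  have hJJ : ∀ y, J (J y) = y := fun y => by
    rw [← Equiv.Perm.mul_apply, hJ1, Equiv.Perm.one_apply]
  have hAA : ∀ y, A (A y) = y := fun y => by
    rw [← Equiv.Perm.mul_apply, hA1, Equiv.Perm.one_apply]
  have hσ1 : σ * σ = 1 := Equiv.swap_mul_self s t
  have hσσ : ∀ y, σ (σ y) = y := fun y => by
    rw [← Equiv.Perm.mul_apply, hσ1, Equiv.Perm.one_apply]
  have hA'app : ∀ y, A' y = σ (A (σ y)) := fun y => by
    rw [hA'def, Equiv.Perm.mul_apply, Equiv.Perm.mul_apply]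
  have hA'1 : A' * A' = 1 := by
    refine Equiv.ext fun y => ?_
    rw [Equiv.Perm.mul_apply, Equiv.Perm.one_apply, hA'app (A' y), hA'app y, hσσ, hAA, hσσ]
  have hA'f : ∀ x, A' x ≠ x := by
    intro x hx
    rw [hA'app] at hx
    apply hAf (σ x)
    have := congrArg σ hx
    rwa [hσσ] at this
  set Os := orbit G s with hOsdef
  set Ot := orbit G t with hOtdef
  have hsOs : s ∈ Os := mem_orbit_self s
  have htOt : t ∈ Ot := mem_orbit_self t
  have hst' : t ∉ Os := fun h => hst (mem_orbit_symm.mp h)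
  have hdisj : Disjoint Os Ot := by
    rw [Set.disjoint_left]
    intro y hys hyt
    have h1 : orbit G y = Os := orbit_eq_iff.mpr hys
    have h2 : orbit G y = Ot := orbit_eq_iff.mpr hyt
    have h3 : Os = Ot := by rw [← h1, h2]
    exact hst (h3 ▸ hsOs)
  have hAsOs : A s ∈ Os := apply_mem_orbit hAG hsOs
  have hAtOt : A t ∈ Ot := apply_mem_orbit hAG htOt
  have hJsOs : J s ∈ Os := apply_mem_orbit hJG hsOs
  have hJAsOs : J (A s) ∈ Os := apply_mem_orbit hJG hAsOs
  have hAt_ne_s : A t ≠ s := fun h => hst (h ▸ hAtOt)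
  have hAt_ne_t : A t ≠ t := hAf t
  have hAs_ne_s : A s ≠ s := hAf s
  have hAs_ne_t : A s ≠ t := fun h => hst' (h ▸ hAsOs)
  have hσs : σ s = t := swap_apply_left s t
  have hσt : σ t = s := swap_apply_right s t
  have hσo : ∀ y, y ≠ s → y ≠ t → σ y = y := fun y h1 h2 => swap_apply_of_ne_of_ne h1 h2
  have hA'eq : ∀ y, y ≠ s → y ≠ t → A y ≠ s → A y ≠ t → A' y = A y := by
    intro y h1 h2 h3 h4
    rw [hA'app, hσo y h1 h2, hσo (A y) h3 h4]
  have hA's : A' s = A t := by rw [hA'app, hσs, hσo (A t) hAt_ne_s hAt_ne_t]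
  have hA't : A' t = A s := by rw [hA'app, hσt, hσo (A s) hAs_ne_s hAs_ne_t]
  have hA'As : A' (A s) = t := by rw [hA'app, hσo (A s) hAs_ne_s hAs_ne_t, hAA, hσs]
  have hA'At : A' (A t) = s := by rw [hA'app, hσo (A t) hAt_ne_s hAt_ne_t, hAA, hσt]
  -- the key connectivity argument
  set Q := orbit G' s with hQdef
  have hsQ : s ∈ Q := mem_orbit_self s
  have hAtQ : A t ∈ Q := hA's ▸ apply_mem_orbit hA'G' hsQ
  set c := A * J with hcdef
  set c' := A' * J with hc'def
  have hcG : c ∈ G := mul_mem hAG hJG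
  have hc'G' : c' ∈ G' := mul_mem hA'G' hJG'
  have htrack : ∀ k : ℕ, (c ^ k) (A t) ∈ Ot := fun k =>
    apply_mem_orbit (pow_mem hcG k) hAtOt
  have hstep : ∀ y, y ∈ Ot → y ≠ J t → y ≠ J (A t) → c' y = c y := by
    intro y hy h1 h2
    have hJy_ne_s : J y ≠ s := by
      intro h
      have : y = J s := by rw [← h, hJJ]
      exact (Set.disjoint_right.mp hdisj hy) (this ▸ hJsOs)
    have hJy_ne_t : J y ≠ t := by
      intro h
      exact h1 (by rw [← h, hJJ])
    have hAJy_ne_s : A (J y) ≠ s := by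
      intro h
      have : J y = A s := by rw [← h, hAA]
      have : y = J (A s) := by rw [← this, hJJ]
      exact (Set.disjoint_right.mp hdisj hy) (this ▸ hJAsOs)
    have hAJy_ne_t : A (J y) ≠ t := by
      intro h
      have h' : J y = A t := by rw [← h, hAA]
      exact h2 (by rw [← h', hJJ])
    show (A' * J) y = (A * J) y
    rw [Equiv.Perm.mul_apply, Equiv.Perm.mul_apply]
    exact hA'eq (J y) hJy_ne_s hJy_ne_t hAJy_ne_s hAJy_ne_t
  have hex : ∃ k : ℕ, (c ^ k) (A t) = J t := by
    have hN : 0 < orderOf c := orderOf_pos c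
    refine ⟨orderOf c - 1, ?_⟩
    have hAt : c (J t) = A t := by rw [hcdef, Equiv.Perm.mul_apply, hJJ]
    have : (c ^ (orderOf c - 1)) (c (J t)) = (c ^ orderOf c) (J t) := by
      rw [← Equiv.Perm.mul_apply, ← pow_succ, Nat.sub_add_cancel hN]
    rw [hAt] at this
    rw [this, pow_orderOf_eq_one, Equiv.Perm.one_apply]
  set k₀ := Nat.find hex with hk₀def
  have hk₀ : (c ^ k₀) (A t) = J t := Nat.find_spec hex
  have hmin : ∀ j, j < k₀ → (c ^ j) (A t) ≠ J t := fun j hj => Nat.find_min hex hj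
  have hnotJAt : ∀ j : ℕ, (c ^ j) (A t) ≠ J (A t) := by
    intro j hj
    have h1 : (c ^ (j + 1)) (A t) = t := by
      rw [pow_succ', Equiv.Perm.mul_apply, hj, hcdef, Equiv.Perm.mul_apply, hJJ, hAA]
    have h2 : ((c ^ (j + 1))⁻¹) t = A t := by
      conv_lhs => rw [← h1]
      rw [← Equiv.Perm.mul_apply, inv_mul_cancel, Equiv.Perm.one_apply]
    refine not_adj_in_cycle hJ1 hJf hA1 hAf t ⟨⟨(c ^ (j + 1))⁻¹, ?_⟩, h2⟩
    exact inv_mem (Subgroup.npow_mem_zpowers c (j + 1))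
  have htrackeq : ∀ k, k ≤ k₀ → (c' ^ k) (A t) = (c ^ k) (A t) := by
    intro k
    induction k with
    | zero => intro _; rfl
    | succ m ih =>
        intro hm
        have hm' : m ≤ k₀ := Nat.le_of_succ_le hm
        rw [pow_succ', Equiv.Perm.mul_apply, ih hm',
          hstep _ (htrack m) (hmin m (Nat.lt_of_succ_le hm)) (hnotJAt m),
          ← Equiv.Perm.mul_apply, ← pow_succ']
  have hAsQ : A s ∈ Q := by
    have h1 : (c' ^ (k₀ + 1)) (A t) = A s := by
      rw [pow_succ', Equiv.Perm.mul_apply, htrackeq k₀ le_rfl, hk₀, hc'def,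
        Equiv.Perm.mul_apply, hJJ, hA't]
    exact h1 ▸ apply_mem_orbit (pow_mem hc'G' (k₀ + 1)) hAtQ
  have htQ : t ∈ Q := hA'As ▸ apply_mem_orbit hA'G' hAsQ
  -- Q equals the union of the two orbits
  have hMJ : ∀ y ∈ Os ∪ Ot, J y ∈ Os ∪ Ot := fun y hy =>
    hy.imp (apply_mem_orbit hJG) (apply_mem_orbit hJG)
  have hMA : ∀ y ∈ Os ∪ Ot, A y ∈ Os ∪ Ot := fun y hy =>
    hy.imp (apply_mem_orbit hAG) (apply_mem_orbit hAG)
  have hMσ : ∀ y ∈ Os ∪ Ot, σ y ∈ Os ∪ Ot := by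
    intro y hy
    by_cases h1 : y = s
    · rw [h1, hσs]; exact Or.inr htOt
    by_cases h2 : y = t
    · rw [h2, hσt]; exact Or.inl hsOs
    · rwa [hσo y h1 h2]
  have hMA' : ∀ y ∈ Os ∪ Ot, A' y ∈ Os ∪ Ot := by
    intro y hy
    rw [hA'app]
    exact hMσ _ (hMA _ (hMσ _ hy))
  have hQsub : Q ⊆ Os ∪ Ot :=
    orbit_subset_of_closed hJ1 hA'1 hMJ hMA' (Or.inl hsOs)
  have hQJ : ∀ y ∈ Q, J y ∈ Q := fun y hy => apply_mem_orbit hJG' hy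
  have hQA : ∀ y ∈ Q, A y ∈ Q := by
    intro y hy
    by_cases h1 : y = s
    · rw [h1]; exact hAsQ
    by_cases h2 : y = t
    · rw [h2]; exact hAtQ
    by_cases h3 : y = A s
    · rw [h3, hAA]; exact hsQ
    by_cases h4 : y = A t
    · rw [h4, hAA]; exact htQ
    · have hAy_ne_s : A y ≠ s := fun h => h3 (by rw [← h, hAA])
      have hAy_ne_t : A y ≠ t := fun h => h4 (by rw [← h, hAA])
      rw [← hA'eq y h1 h2 hAy_ne_s hAy_ne_t]
      exact apply_mem_orbit hA'G' hy
  have hQeq : Q = Os ∪ Ot := by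
    refine Set.Subset.antisymm hQsub (Set.union_subset ?_ ?_)
    · exact orbit_subset_of_closed hJ1 hA1 hQJ hQA hsQ
    · exact orbit_subset_of_closed hJ1 hA1 hQJ hQA htQ
  -- orbits away from s and t are unchanged
  have hfix : ∀ x : α, s ∉ orbit G x → t ∉ orbit G x → orbit G' x = orbit G x := by
    intro x hsx htx
    have hsub1 : orbit G' x ⊆ orbit G x := by
      refine orbit_subset_of_closed hJ1 hA'1 (fun y hy => apply_mem_orbit hJG hy) ?_
        (mem_orbit_self x)
      intro y hy
      have h1 : y ≠ s := fun h => hsx (h ▸ hy)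
      have h2 : y ≠ t := fun h => htx (h ▸ hy)
      have hAy : A y ∈ orbit G x := apply_mem_orbit hAG hy
      have h3 : A y ≠ s := fun h => hsx (h ▸ hAy)
      have h4 : A y ≠ t := fun h => htx (h ▸ hAy)
      rw [hA'eq y h1 h2 h3 h4]
      exact hAy
    refine Set.Subset.antisymm hsub1 ?_
    refine orbit_subset_of_closed hJ1 hA1 (fun y hy => apply_mem_orbit hJG' hy) ?_
      (mem_orbit_self x)
    intro y hy
    have hy' : y ∈ orbit G x := hsub1 hy
    have h1 : y ≠ s := fun h => hsx (h ▸ hy')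
    have h2 : y ≠ t := fun h => htx (h ▸ hy')
    have hAy : A y ∈ orbit G x := apply_mem_orbit hAG hy'
    have h3 : A y ≠ s := fun h => hsx (h ▸ hAy)
    have h4 : A y ≠ t := fun h => htx (h ▸ hAy)
    rw [← hA'eq y h1 h2 h3 h4]
    exact apply_mem_orbit hA'G' hy
  -- the set equality
  ext S
  simp only [Set.mem_setOf_eq, Set.mem_union, Set.mem_diff, Set.mem_insert_iff,
    Set.mem_singleton_iff]
  constructor
  · rintro ⟨x, rfl⟩
    by_cases hx : x ∈ Os ∪ Ot
    · right
      have hxQ : x ∈ Q := hQeq ▸ hx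
      rw [orbit_eq_iff.mpr hxQ]
      exact hQeq
    · left
      have hsx : s ∉ orbit G x := fun h =>
        hx (Or.inl (mem_orbit_symm.mp h))
      have htx : t ∉ orbit G x := fun h =>
        hx (Or.inr (mem_orbit_symm.mp h))
      refine ⟨⟨x, hfix x hsx htx⟩, ?_⟩
      rw [hfix x hsx htx]
      push_neg
      constructor
      · intro h; exact hx (Or.inl (h ▸ mem_orbit_self x))
      · intro h; exact hx (Or.inr (h ▸ mem_orbit_self x))
  · rintro (⟨⟨x, rfl⟩, hne⟩ | rfl)
    · push_neg at hne
      have hsx : s ∉ orbit G x := by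
        intro h
        exact hne.1 (orbit_eq_iff.mpr h).symm
      have htx : t ∉ orbit G x := by
        intro h
        exact hne.2 (orbit_eq_iff.mpr h).symm
      exact ⟨x, (hfix x hsx htx).symm⟩
    · exact ⟨s, hQeq.symm⟩


lemma main_sizes (J A : Equiv.Perm α) (hJ1 : J * J = 1) (hJf : ∀ x, J x ≠ x)
    (hA1 : A * A = 1) (hAf : ∀ x, A x ≠ x) (s t : α)
    (hst : s ∉ orbit (closure {J, A}) t) :
    orbitSizes (closure {J, swap s t * A * swap s t}) =
      ((orbitSizes (closure {J, A})).erase (Nat.card (orbit (closure {J, A}) s))).erase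
        (Nat.card (orbit (closure {J, A}) t)) +
      {Nat.card (orbit (closure {J, A}) s) + Nat.card (orbit (closure {J, A}) t)} := by
  classical
  have part1 := main_orbits J A hJ1 hJf hA1 hAf s t hst
  set G := closure {J, A} with hGdef
  set G' := closure {J, swap s t * A * swap s t} with hG'def
  set Os := orbit G s with hOsdef
  set Ot := orbit G t with hOtdef
  have hsOs : s ∈ Os := mem_orbit_self s
  have htOt : t ∈ Ot := mem_orbit_self t
  have hst' : t ∉ Os := fun h => hst (mem_orbit_symm.mp h)
  have hdisj : Disjoint Os Ot := by
    rw [Set.disjoint_left]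
    intro y hys hyt
    have h1 : orbit G y = Os := orbit_eq_iff.mpr hys
    have h2 : orbit G y = Ot := orbit_eq_iff.mpr hyt
    have h3 : Os = Ot := by rw [← h1, h2]
    exact hst (h3 ▸ hsOs)
  set F := orbFinset G with hFdef
  set F' := orbFinset G' with hF'def
  have hOsF : Os ∈ F := mem_orbFinset.mpr ⟨s, rfl⟩
  have hOtF : Ot ∈ F := mem_orbFinset.mpr ⟨t, rfl⟩
  have hOtOs : Ot ≠ Os := fun h => hst' (h ▸ htOt)
  have hMF : (Os ∪ Ot) ∉ F := by
    intro h
    obtain ⟨x, hx⟩ := mem_orbFinset.mp h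
    have hxM : x ∈ Os ∪ Ot := by rw [hx]; exact mem_orbit_self x
    rcases hxM with hxs | hxt
    · have : orbit G x = Os := orbit_eq_iff.mpr hxs
      rw [this] at hx
      exact hst' (hx ▸ (Or.inr htOt : t ∈ Os ∪ Ot))
    · have : orbit G x = Ot := orbit_eq_iff.mpr hxt
      rw [this] at hx
      exact hst (hx ▸ (Or.inl hsOs : s ∈ Os ∪ Ot))
  have hFeq : F' = insert (Os ∪ Ot) ((F.erase Os).erase Ot) := by
    apply Finset.ext
    intro S
    have hS := Set.ext_iff.mp part1 S
    simp only [Set.mem_union, Set.mem_diff, Set.mem_setOf_eq, Set.mem_insert_iff,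
      Set.mem_singleton_iff] at hS
    rw [hF'def, mem_orbFinset, Finset.mem_insert, Finset.mem_erase, Finset.mem_erase,
      mem_orbFinset]
    constructor
    · intro h
      rcases hS.mp h with ⟨h1, h2⟩ | h1
      · exact Or.inr ⟨fun h3 => h2 (Or.inr h3), fun h3 => h2 (Or.inl h3), h1⟩
      · exact Or.inl h1
    · intro h
      apply hS.mpr
      rcases h with h1 | ⟨h1, h2, h3⟩
      · exact Or.inr h1
      · exact Or.inl ⟨h3, fun h4 => h4.elim h2 h1⟩
  have hMnotin : (Os ∪ Ot) ∉ (F.erase Os).erase Ot := fun h =>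
    hMF (Finset.mem_of_mem_erase (Finset.mem_of_mem_erase h))
  have hcardM : Nat.card ↑(Os ∪ Ot) = Nat.card ↑Os + Nat.card ↑Ot := by
    rw [Nat.card_coe_set_eq, Nat.card_coe_set_eq, Nat.card_coe_set_eq,
      Set.ncard_union_eq hdisj (Set.toFinite _) (Set.toFinite _)]
  have hOsval : Os ∈ F.val := hOsF
  have hOtval : Ot ∈ F.val.erase Os := (Multiset.mem_erase_of_ne hOtOs).mpr hOtF
  rw [orbitSizes_eq G', orbitSizes_eq G, ← hFdef, ← hF'def, hFeq,
    Finset.insert_val_of_notMem hMnotin, Multiset.map_cons, Finset.erase_val,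
    Finset.erase_val, Multiset.map_erase_of_mem _ _ hOtval, Multiset.map_erase_of_mem _ _ hOsval,
    hcardM, add_comm (((Multiset.map _ F.val).erase _).erase _)
      ({Nat.card ↑Os + Nat.card ↑Ot} : Multiset ℕ), Multiset.singleton_add]


end MatchSwapAux

/-- Let `J`, `A` be perfect matchings of `Fin (2n)` and let `s`, `t` lie in different
connected components (orbits of `⟨J,A⟩`). Conjugating `A` by the transposition `(s t)`
merges exactly those two components: the orbits of `⟨J, (s t)A(s t)⟩` are the orbits
of `⟨J,A⟩` other than those of `s` and `t`, together with the union of the orbits of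
`s` and `t`. In particular `d(J, (s t)A(s t))` is obtained from `d(J,A)` by replacing
the parts given by the sizes of the orbits of `s` and of `t` by a single part equal to
their sum. -/
theorem matching_swap_merges_components (n : ℕ) (hn : 1 ≤ n)
    (J A : PerfMatching (2 * n)) (s t : Fin (2 * n))
    (hst : s ∉ MulAction.orbit (Subgroup.closure {J.1, A.1}) t) :
    ({S : Set (Fin (2 * n)) | ∃ x, S =
        MulAction.orbit (Subgroup.closure {J.1, Equiv.swap s t * A.1 * Equiv.swap s t}) x} =
      ({S : Set (Fin (2 * n)) | ∃ x, S = MulAction.orbit (Subgroup.closure {J.1, A.1}) x} \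
          {MulAction.orbit (Subgroup.closure {J.1, A.1}) s,
            MulAction.orbit (Subgroup.closure {J.1, A.1}) t}) ∪
        {(MulAction.orbit (Subgroup.closure {J.1, A.1}) s : Set (Fin (2 * n))) ∪
          MulAction.orbit (Subgroup.closure {J.1, A.1}) t}) ∧
    dMatch J.1 (Equiv.swap s t * A.1 * Equiv.swap s t) =
      (((dMatch J.1 A.1).erase
          (Nat.card (MulAction.orbit (Subgroup.closure {J.1, A.1}) s))).erase
          (Nat.card (MulAction.orbit (Subgroup.closure {J.1, A.1}) t))) +
        {Nat.card (MulAction.orbit (Subgroup.closure {J.1, A.1}) s) +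
          Nat.card (MulAction.orbit (Subgroup.closure {J.1, A.1}) t)} := by
  refine ⟨MatchSwapAux.main_orbits J.1 A.1 J.2.1 J.2.2 A.2.1 A.2.2 s t hst, ?_⟩
  exact MatchSwapAux.main_sizes J.1 A.1 J.2.1 J.2.2 A.2.1 A.2.2 s t hst
end

section
/- Let n ≥ 2 and let e be a fixed edge of the complete graph on Fin (2n) (a fixed transposition). In the permutation module ℂ[M_{2n}], let v = Σ_{A ∈ M_{2n}} A − (2n−1) · Σ_{A ∈ M_{2n}, e ∈ A} A, where the second sum is over perfect matchings containing the edge e. Then v is a simultaneous eigenvector of all the matrices N_{2μ}, μ a partition of n; explicitly, for each partition μ of n: if 1 is not a part of μ then N_{2μ} v = (P(2μ) / (−(2n−2))) · v, and if 1 is a part of μ then N_{2μ} v = ((P(2μ) − (2n−1) · P'(2μ')) / (−(2n−2))) · v, where P(2μ) is the number of perfect matchings B of Fin (2n) with d(J,B) = 2μ for a fixed perfect matching J of Fin (2n), μ' is the partition of n−1 obtained from μ by deleting one part equal to 1, and P'(2μ') is the number of perfect matchings B' of Fin (2n−2) with d(J',B') = 2μ' for a fixed perfect matching J' of Fin (2n−2).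 -/
/-- The orbital basis element `N_{2μ}` of the Bose–Mesner algebra, as a matrix acting
on `ℂ[M_{2n}]`. -/
noncomputable def Nmat (n : ℕ) (μ : Nat.Partition n) :
    Matrix (PerfMatching (2 * n)) (PerfMatching (2 * n)) ℂ :=
  Matrix.of fun A B => if dMatch A.1 B.1 = twice μ.parts then 1 else 0

/-- The vector `v = Σ_A A − (2n−1)·Σ_{e∈A} A ∈ ℂ[M_{2n}]`, where the second sum ranges
over the perfect matchings containing the fixed edge `e = {x,y}`; in coordinates its
`A`-entry is `1 − (2n−1)` if `A` contains `e`, and `1` otherwise. -/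
noncomputable def gzVec (n : ℕ) (x y : Fin (2 * n)) : PerfMatching (2 * n) → ℂ :=
  fun A => if A.1 x = y then 1 - (2 * (n : ℂ) - 1) else 1

open Equiv MulAction Subgroup

namespace GZ

variable {α β : Type*}

/-- `permCongr` as a monoid hom. -/
def pcHom (e : α ≃ β) : Equiv.Perm α →* Equiv.Perm β where
  toFun g := e.permCongr g
  map_one' := by ext b; simp
  map_mul' g h := by ext b; simp

lemma pcHom_apply (e : α ≃ β) (g : Equiv.Perm α) (a : α) : pcHom e g (e a) = e (g a) := by
  simp [pcHom]

lemma orbit_map_pcHom (e : α ≃ β) (G : Subgroup (Equiv.Perm α)) (a : α) :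
    (orbit (G.map (pcHom e)) (e a) : Set β) = e '' orbit G a := by
  ext b
  constructor
  · rintro ⟨⟨g', hg'⟩, rfl⟩
    obtain ⟨g, hg, rfl⟩ := hg'
    exact ⟨g a, ⟨⟨g, hg⟩, rfl⟩, (pcHom_apply e g a).symm⟩
  · rintro ⟨c, ⟨⟨g, hg⟩, rfl⟩, rfl⟩
    exact ⟨⟨pcHom e g, Subgroup.mem_map_of_mem _ hg⟩, pcHom_apply e g a⟩

lemma card_orbit_congr {G : Subgroup (Equiv.Perm α)} {a b : α}
    (h : a ∈ orbit G b) : Nat.card (orbit G a) = Nat.card (orbit G b) := by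
  rw [MulAction.orbit_eq_iff.mpr h]

lemma orbitSizes_map [Fintype α] [Fintype β] (e : α ≃ β) (G : Subgroup (Equiv.Perm α)) :
    orbitSizes (G.map (pcHom e)) = orbitSizes G := by
  classical
  set G' := G.map (pcHom e) with hG'
  have horb : ∀ a : α, (orbit G' (e a) : Set β) = e '' orbit G a := fun a => by
    rw [hG', orbit_map_pcHom]
  have hrel : ∀ a₁ a₂ : α, (orbitRel G α).r a₁ a₂ ↔ (orbitRel G' β).r (e a₁) (e a₂) := by
    intro a₁ a₂
    rw [orbitRel_apply, orbitRel_apply, horb]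
    exact ⟨fun h => Set.mem_image_of_mem e h,
      fun h => by obtain ⟨c, hc, hce⟩ := h; rwa [← e.injective hce]⟩
  let Q : Quotient (orbitRel G α) ≃ Quotient (orbitRel G' β) := Quotient.congr e hrel
  unfold orbitSizes
  letI : Fintype (Quotient (orbitRel G α)) := Fintype.ofFinite _
  letI : Fintype (Quotient (orbitRel G' β)) := Fintype.ofFinite _
  have key : ∀ q : Quotient (orbitRel G α),
      Nat.card (orbit G' (Q q).out) = Nat.card (orbit G q.out) := by
    intro q
    induction q using Quotient.inductionOn with
    | h a =>
      have h1 : Q ⟦a⟧ = ⟦e a⟧ := rfl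
      rw [h1]
      have h2 : Nat.card (orbit G' (⟦e a⟧ : Quotient (orbitRel G' β)).out)
          = Nat.card (orbit G' (e a)) :=
        card_orbit_congr (by rw [← orbitRel_apply]; exact Quotient.mk_out (e a))
      have h3 : Nat.card (orbit G (⟦a⟧ : Quotient (orbitRel G α)).out)
          = Nat.card (orbit G a) :=
        card_orbit_congr (by rw [← orbitRel_apply]; exact Quotient.mk_out a)
      rw [h2, h3, horb, Nat.card_coe_set_eq, Nat.card_coe_set_eq,
        Set.ncard_image_of_injective _ e.injective]
  calc (Finset.univ : Finset (Quotient (orbitRel G' β))).val.map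
        (fun q => Nat.card (orbit G' q.out))
      = ((Finset.univ : Finset (Quotient (orbitRel G α))).map Q.toEmbedding).val.map
        (fun q => Nat.card (orbit G' q.out)) := by rw [Finset.map_univ_equiv]
    _ = (Finset.univ : Finset (Quotient (orbitRel G α))).val.map
        (fun q => Nat.card (orbit G' (Q q).out)) := by
          rw [Finset.map_val, Multiset.map_map]; rfl
    _ = _ := Multiset.map_congr rfl (fun q _ => key q)
lemma orbitSizes_closure_pair [Fintype α] [Fintype β] (e : α ≃ β) (A B : Equiv.Perm α) :
    orbitSizes (closure {e.permCongr A, e.permCongr B}) = orbitSizes (closure {A, B}) := by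
  rw [← orbitSizes_map e (closure {A, B})]
  congr 1
  rw [MonoidHom.map_closure]
  congr 1
  rw [Set.image_insert_eq, Set.image_singleton]
  rfl

lemma conj_eq_permCongr (σ A : Equiv.Perm α) : σ * A * σ⁻¹ = Equiv.permCongr σ A := by
  ext x; simp [Equiv.permCongr]

lemma dMatch_conj {N : ℕ} (σ A B : Equiv.Perm (Fin N)) :
    dMatch (σ * A * σ⁻¹) (σ * B * σ⁻¹) = dMatch A B := by
  unfold dMatch
  rw [conj_eq_permCongr, conj_eq_permCongr]
  exact orbitSizes_closure_pair σ A B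

lemma fpf_cycleType [Fintype α] [DecidableEq α] {C : Equiv.Perm α}
    (hC2 : C * C = 1) (hCf : ∀ x, C x ≠ x) :
    C.cycleType = Multiset.replicate (Fintype.card α / 2) 2 := by
  have hord : orderOf C ∣ 2 := orderOf_dvd_of_pow_eq_one (by rw [pow_two]; exact hC2)
  have hall : ∀ r ∈ C.cycleType, r = 2 := by
    intro r hr
    have h1 : r ∣ 2 :=
      dvd_trans (Multiset.dvd_lcm hr) (by rw [Equiv.Perm.lcm_cycleType]; exact hord)
    have h2 : 2 ≤ r := Equiv.Perm.two_le_of_mem_cycleType hr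
    exact le_antisymm (Nat.le_of_dvd (by norm_num) h1) h2
  have hrep : C.cycleType = Multiset.replicate C.cycleType.card 2 :=
    Multiset.eq_replicate_card.mpr hall
  have hsupp : C.support = Finset.univ := Finset.eq_univ_iff_forall.mpr
    (fun x => Equiv.Perm.mem_support.mpr (hCf x))
  have hsum : C.cycleType.sum = Fintype.card α := by
    rw [Equiv.Perm.sum_cycleType, hsupp, Finset.card_univ]
  have h2c : 2 * C.cycleType.card = Fintype.card α := by
    rw [hrep] at hsum
    simpa [Multiset.sum_replicate, mul_comm] using hsum
  have : C.cycleType.card = Fintype.card α / 2 := by omega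
  rw [hrep, this]

/-- fixed-point-free involutions on a finite type are conjugate -/
lemma fpf_isConj [Fintype α] [DecidableEq α] {A B : Equiv.Perm α}
    (hA2 : A * A = 1) (hAf : ∀ x, A x ≠ x) (hB2 : B * B = 1) (hBf : ∀ x, B x ≠ x) :
    ∃ σ : Equiv.Perm α, σ * A * σ⁻¹ = B := by
  have hc : IsConj A B := Equiv.Perm.isConj_of_cycleType_eq
    (by rw [fpf_cycleType hA2 hAf, fpf_cycleType hB2 hBf])
  obtain ⟨σ, hσ⟩ := isConj_iff.mp hc
  exact ⟨σ, hσ⟩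
lemma invol_apply_apply {A : Equiv.Perm α} (hA2 : A * A = 1) (x : α) : A (A x) = x := by
  have := congrArg (fun g => g x) hA2; simpa using this

section Move
variable [DecidableEq α]

/-- An element of the centralizer of the f.p.f. involution `A` moving `a` to `b`. -/
def move (A : Equiv.Perm α) (a b : α) : Equiv.Perm α :=
  if a = b then 1 else if a = A b then Equiv.swap b (A b)
  else Equiv.swap a b * Equiv.swap (A a) (A b)

variable {A : Equiv.Perm α}

lemma move_comm (hA2 : A * A = 1) (hAf : ∀ x, A x ≠ x) (a b : α) :
    move A a b * A = A * move A a b := by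
  have key : A * move A a b * A⁻¹ = move A a b := by
    unfold move
    split_ifs with h1 h2
    · simp
    · rw [← Equiv.swap_apply_apply, invol_apply_apply hA2, Equiv.swap_comm]
    · have hd : (Equiv.swap a b).Disjoint (Equiv.swap (A a) (A b)) := by
        intro z
        rcases eq_or_ne z a with rfl | hza
        · right
          exact Equiv.swap_apply_of_ne_of_ne ((hAf z).symm ∘ Eq.symm ∘ Eq.symm) h2
        · rcases eq_or_ne z b with rfl | hzb
          · right
            refine Equiv.swap_apply_of_ne_of_ne (fun h => h2 ?_) ((hAf z).symm ∘ Eq.symm ∘ Eq.symm)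
            rw [h, invol_apply_apply hA2]
          · left; exact Equiv.swap_apply_of_ne_of_ne hza hzb
      have expand : A * (Equiv.swap a b * Equiv.swap (A a) (A b)) * A⁻¹
          = (A * Equiv.swap a b * A⁻¹) * (A * Equiv.swap (A a) (A b) * A⁻¹) := by group
      rw [expand, ← Equiv.swap_apply_apply, ← Equiv.swap_apply_apply,
        invol_apply_apply hA2, invol_apply_apply hA2]
      exact (hd.commute.eq).symm
  calc move A a b * A = (A * move A a b * A⁻¹) * A := by rw [key]
    _ = A * move A a b := by group

lemma move_apply (hA2 : A * A = 1) (hAf : ∀ x, A x ≠ x) (a b : α) : move A a b a = b := by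
  unfold move
  split_ifs with h1 h2
  · simp [h1]
  · rw [h2, Equiv.swap_apply_right]
  · rw [Equiv.Perm.mul_apply,
      Equiv.swap_apply_of_ne_of_ne ((hAf a).symm ∘ Eq.symm ∘ Eq.symm) h2,
      Equiv.swap_apply_left]

lemma move_apply_A (hA2 : A * A = 1) (hAf : ∀ x, A x ≠ x) (a b : α) :
    move A a b (A a) = A b := by
  have h := congrArg (fun g => g a) (move_comm hA2 hAf a b)
  simp only [Equiv.Perm.mul_apply] at h
  rw [h, move_apply hA2 hAf]

lemma move_fixes (hA2 : A * A = 1) (hAf : ∀ x, A x ≠ x) {a b c : α}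
    (h1 : c ≠ a) (h2 : c ≠ b) (h3 : c ≠ A a) (h4 : c ≠ A b) : move A a b c = c := by
  unfold move
  split_ifs with g1 g2
  · simp
  · exact Equiv.swap_apply_of_ne_of_ne h2 h4
  · rw [Equiv.Perm.mul_apply, Equiv.swap_apply_of_ne_of_ne h3 h4,
      Equiv.swap_apply_of_ne_of_ne h1 h2]

end Move
lemma flag_transitive [Fintype α] [DecidableEq α] {A A' : Equiv.Perm α}
    (hA2 : A * A = 1) (hAf : ∀ x, A x ≠ x) (hA'2 : A' * A' = 1) (hA'f : ∀ x, A' x ≠ x)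
    {x y x' y' : α} (hxy : x ≠ y) (hxy' : x' ≠ y') (hiff : (A x = y ↔ A' x' = y')) :
    ∃ σ : Equiv.Perm α, σ * A * σ⁻¹ = A' ∧ σ x = x' ∧ σ y = y' := by
  obtain ⟨τ, hτ⟩ := fpf_isConj hA2 hAf hA'2 hA'f
  have hconj : ∀ z, A' (τ z) = τ (A z) := by
    intro z
    have := congrArg (fun g => g (τ z)) hτ
    simpa using this.symm
  have centr_conj : ∀ ρ : Equiv.Perm α, ρ * A' = A' * ρ → ρ * A' * ρ⁻¹ = A' := by
    intro ρ h; rw [h]; group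
  set u := τ x with hu
  set v := τ y with hv
  have huv : u ≠ v := fun h => hxy (τ.injective h)
  have hAu : A' u = τ (A x) := hconj x
  by_cases hc : A x = y
  · have hA'x' : A' x' = y' := hiff.mp hc
    have hA'uv : A' u = v := by rw [hAu, hc]
    refine ⟨move A' u x' * τ, ?_, ?_, ?_⟩
    · have : (move A' u x' * τ) * A * (move A' u x' * τ)⁻¹
          = move A' u x' * (τ * A * τ⁻¹) * (move A' u x')⁻¹ := by group
      rw [this, hτ]
      exact centr_conj _ (move_comm hA'2 hA'f u x')
    · simp only [Equiv.Perm.mul_apply, ← hu]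
      exact move_apply hA'2 hA'f u x'
    · simp only [Equiv.Perm.mul_apply, ← hv]
      rw [← hA'uv, move_apply_A hA'2 hA'f, hA'x']
  · have hA'x'y' : A' x' ≠ y' := fun h => hc (hiff.mpr h)
    have hA'uv : A' u ≠ v := by
      rw [hAu, hv]; exact fun h => hc (τ.injective h)
    set ρ₁ := move A' u x' with hρ₁
    set w := ρ₁ v with hw
    have hρ₁u : ρ₁ u = x' := move_apply hA'2 hA'f u x'
    have hρ₁Au : ρ₁ (A' u) = A' x' := move_apply_A hA'2 hA'f u x'
    have hwx' : w ≠ x' := fun h => (Ne.symm huv) (ρ₁.injective (h.trans hρ₁u.symm))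
    have hwAx' : w ≠ A' x' := fun h =>
      hA'uv ((ρ₁.injective (h.trans hρ₁Au.symm) : v = A' u).symm)
    set ρ₂ := move A' w y' with hρ₂
    have hρ₂x' : ρ₂ x' = x' := by
      refine move_fixes hA'2 hA'f (Ne.symm hwx') hxy' ?_ ?_
      · intro h
        exact hwAx' (by rw [← invol_apply_apply hA'2 w, ← h])
      · intro h
        exact hA'x'y' (by rw [← invol_apply_apply hA'2 y', ← h])
    refine ⟨ρ₂ * ρ₁ * τ, ?_, ?_, ?_⟩
    · have : (ρ₂ * ρ₁ * τ) * A * (ρ₂ * ρ₁ * τ)⁻¹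
          = ρ₂ * (ρ₁ * (τ * A * τ⁻¹) * ρ₁⁻¹) * ρ₂⁻¹ := by group
      rw [this, hτ, centr_conj _ (move_comm hA'2 hA'f u x'),
        centr_conj _ (move_comm hA'2 hA'f w y')]
    · simp only [Equiv.Perm.mul_apply, ← hu, hρ₁u, hρ₂x']
    · simp only [Equiv.Perm.mul_apply, ← hv, ← hw]
      exact move_apply hA'2 hA'f w y'
lemma conj_props {N : ℕ} (σ : Equiv.Perm (Fin N)) {B : Equiv.Perm (Fin N)}
    (hB : B * B = 1 ∧ ∀ x, B x ≠ x) :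
    (σ * B * σ⁻¹) * (σ * B * σ⁻¹) = 1 ∧ ∀ x, (σ * B * σ⁻¹) x ≠ x := by
  constructor
  · have : (σ * B * σ⁻¹) * (σ * B * σ⁻¹) = σ * (B * B) * σ⁻¹ := by group
    rw [this, hB.1]; group
  · intro z h
    simp only [Equiv.Perm.mul_apply] at h
    have := congrArg σ.symm h
    simp only [Equiv.symm_apply_apply] at this
    exact hB.2 _ (by simpa using this)

/-- Conjugation as a bijection of perfect matchings. -/
def conjPMEquiv {N : ℕ} (σ : Equiv.Perm (Fin N)) : PerfMatching N ≃ PerfMatching N where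
  toFun B := ⟨σ * B.1 * σ⁻¹, conj_props σ B.2⟩
  invFun B := ⟨σ⁻¹ * B.1 * σ, by simpa using conj_props σ⁻¹ B.2⟩
  left_inv B := Subtype.ext (by simp only; group)
  right_inv B := Subtype.ext (by simp only; group)

lemma card_cond_conj {N : ℕ} {A A' : PerfMatching N} {x y x' y' : Fin N}
    (hxy : x ≠ y) (hxy' : x' ≠ y') (hiff : (A.1 x = y ↔ A'.1 x' = y')) (m : Multiset ℕ) :
    Nat.card {B : PerfMatching N // dMatch A.1 B.1 = m ∧ B.1 x = y}
      = Nat.card {B : PerfMatching N // dMatch A'.1 B.1 = m ∧ B.1 x' = y'} := by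
  obtain ⟨σ, hσ, hσx, hσy⟩ :=
    flag_transitive A.2.1 A.2.2 A'.2.1 A'.2.2 hxy hxy' hiff
  refine Nat.card_congr (Equiv.subtypeEquiv (conjPMEquiv σ) fun B => ?_)
  have h1 : dMatch A'.1 ((conjPMEquiv σ B).1) = dMatch A.1 B.1 := by
    show dMatch A'.1 (σ * B.1 * σ⁻¹) = _
    rw [← hσ]; exact dMatch_conj σ A.1 B.1
  have h2 : (conjPMEquiv σ B).1 x' = y' ↔ B.1 x = y := by
    show (σ * B.1 * σ⁻¹) x' = y' ↔ _
    simp only [Equiv.Perm.mul_apply]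
    rw [← hσx, ← hσy]
    rw [show σ⁻¹ (σ x) = x from Equiv.Perm.inv_eq_iff_eq.mpr rfl]
    exact ⟨fun h => σ.injective h, fun h => by rw [h]⟩
  rw [h1, h2]

lemma card_d_conj {N : ℕ} (A A' : PerfMatching N) (m : Multiset ℕ) :
    Nat.card {B : PerfMatching N // dMatch A.1 B.1 = m}
      = Nat.card {B : PerfMatching N // dMatch A'.1 B.1 = m} := by
  obtain ⟨σ, hσ⟩ := fpf_isConj A.2.1 A.2.2 A'.2.1 A'.2.2
  refine Nat.card_congr (Equiv.subtypeEquiv (conjPMEquiv σ) fun B => ?_)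
  have h1 : dMatch A'.1 ((conjPMEquiv σ B).1) = dMatch A.1 B.1 := by
    show dMatch A'.1 (σ * B.1 * σ⁻¹) = _
    rw [← hσ]; exact dMatch_conj σ A.1 B.1
  rw [h1]

lemma mem_orbitSizes [Fintype α] (G : Subgroup (Equiv.Perm α)) (a : α) :
    Nat.card (orbit G a) ∈ orbitSizes G := by
  unfold orbitSizes
  letI : Fintype (Quotient (orbitRel G α)) := Fintype.ofFinite _
  refine Multiset.mem_map.mpr ⟨⟦a⟧, (Finset.mem_univ _), ?_⟩
  exact card_orbit_congr (by rw [← orbitRel_apply]; exact Quotient.mk_out a)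

lemma orbit_pair [DecidableEq α] {A B : Equiv.Perm α} (hA2 : A * A = 1) (hB2 : B * B = 1)
    {x y : α} (hxy : x ≠ y) (hA : A x = y) (hB : B x = y) :
    (orbit (closure ({A, B} : Set (Equiv.Perm α))) x : Set α) = {x, y} := by
  have hstep : ∀ g ∈ closure ({A, B} : Set (Equiv.Perm α)),
      g x ∈ ({x, y} : Set α) ∧ g y ∈ ({x, y} : Set α) := by
    intro g hg
    induction hg using Subgroup.closure_induction with
    | mem g hg =>
      rcases hg with rfl | rfl
      · exact ⟨by rw [hA]; right; rfl, by rw [← hA, invol_apply_apply hA2]; left; rfl⟩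
      · exact ⟨by rw [hB]; right; rfl, by rw [← hB, invol_apply_apply hB2]; left; rfl⟩
    | one => exact ⟨Or.inl rfl, Or.inr rfl⟩
    | mul g h hg hh ihg ihh =>
      constructor
      · rcases ihh.1 with h1 | h1 <;> simp only [Equiv.Perm.mul_apply, Set.mem_insert_iff,
          Set.mem_singleton_iff] at * <;> rw [h1]
        · exact ihg.1
        · exact ihg.2
      · rcases ihh.2 with h1 | h1 <;> simp only [Equiv.Perm.mul_apply, Set.mem_insert_iff,
          Set.mem_singleton_iff] at * <;> rw [h1]
        · exact ihg.1
        · exact ihg.2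
    | inv g hg ihg =>
      simp only [Set.mem_insert_iff, Set.mem_singleton_iff] at *
      rcases ihg.1 with h1 | h1 <;> rcases ihg.2 with h2 | h2
      · exact absurd (g.injective (h1.trans h2.symm)) hxy
      · exact ⟨Or.inl (g.injective (by rw [show ∀ z, g (g⁻¹ z) = z from fun z => (Equiv.eq_symm_apply g).mp rfl, h1])),
          Or.inr (g.injective (by rw [show ∀ z, g (g⁻¹ z) = z from fun z => (Equiv.eq_symm_apply g).mp rfl, h2]))⟩
      · exact ⟨Or.inr (g.injective (by rw [show ∀ z, g (g⁻¹ z) = z from fun z => (Equiv.eq_symm_apply g).mp rfl, h2])),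
          Or.inl (g.injective (by rw [show ∀ z, g (g⁻¹ z) = z from fun z => (Equiv.eq_symm_apply g).mp rfl, h1]))⟩
      · exact absurd (g.injective (h1.trans h2.symm)) hxy
  ext z
  constructor
  · rintro ⟨⟨g, hg⟩, rfl⟩
    exact (hstep g hg).1
  · rintro (rfl | rfl)
    · exact ⟨1, by simp⟩
    · exact ⟨⟨A, Subgroup.subset_closure (Or.inl rfl)⟩, hA⟩

lemma two_mem_dMatch {N : ℕ} {A B : Equiv.Perm (Fin N)} (hA2 : A * A = 1) (hB2 : B * B = 1)
    {x y : Fin N} (hxy : x ≠ y) (hA : A x = y) (hB : B x = y) : 2 ∈ dMatch A B := by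
  have := mem_orbitSizes (closure ({A, B} : Set (Equiv.Perm (Fin N)))) x
  rwa [show Nat.card (orbit (closure ({A, B} : Set (Equiv.Perm (Fin N)))) x) = 2 by
    rw [Nat.card_coe_set_eq, orbit_pair hA2 hB2 hxy hA hB, Set.ncard_pair hxy]] at this
section SumDecomp

/-- swap on `Fin 2` -/
def s2 : Equiv.Perm (Fin 2) := Equiv.swap 0 1

lemma s2_props : s2 * s2 = 1 ∧ ∀ i, s2 i ≠ i := by decide

lemma sum_form (J B : Equiv.Perm α) :
    ∀ g ∈ closure ({Equiv.Perm.sumCongr J s2, Equiv.Perm.sumCongr B s2} :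
      Set (Equiv.Perm (α ⊕ Fin 2))),
      ∃ w ∈ closure ({J, B} : Set (Equiv.Perm α)), ∃ u : Equiv.Perm (Fin 2),
        g = Equiv.Perm.sumCongr w u := by
  intro g hg
  induction hg using Subgroup.closure_induction with
  | mem g hg =>
    rcases hg with rfl | rfl
    · exact ⟨J, Subgroup.subset_closure (Or.inl rfl), s2, rfl⟩
    · exact ⟨B, Subgroup.subset_closure (Or.inr rfl), s2, rfl⟩
  | one => exact ⟨1, Subgroup.one_mem _, 1, Equiv.Perm.sumCongr_one.symm⟩
  | mul g h hg hh ihg ihh =>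
    obtain ⟨w, hw, u, rfl⟩ := ihg
    obtain ⟨w', hw', u', rfl⟩ := ihh
    exact ⟨w * w', Subgroup.mul_mem _ hw hw', u * u', Equiv.Perm.sumCongr_mul _ _ _ _⟩
  | inv g hg ihg =>
    obtain ⟨w, hw, u, rfl⟩ := ihg
    exact ⟨w⁻¹, Subgroup.inv_mem _ hw, u⁻¹, (Equiv.Perm.sumCongr_inv _ _).symm⟩

lemma sum_lift (J B : Equiv.Perm α) :
    ∀ w ∈ closure ({J, B} : Set (Equiv.Perm α)),
      ∃ g ∈ closure ({Equiv.Perm.sumCongr J s2, Equiv.Perm.sumCongr B s2} :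
        Set (Equiv.Perm (α ⊕ Fin 2))), ∃ u : Equiv.Perm (Fin 2),
        g = Equiv.Perm.sumCongr w u := by
  intro w hw
  induction hw using Subgroup.closure_induction with
  | mem w hw =>
    rcases hw with rfl | rfl
    · exact ⟨_, Subgroup.subset_closure (Or.inl rfl), s2, rfl⟩
    · exact ⟨_, Subgroup.subset_closure (Or.inr rfl), s2, rfl⟩
  | one => exact ⟨1, Subgroup.one_mem _, 1, Equiv.Perm.sumCongr_one.symm⟩
  | mul w w' hw hw' ihw ihw' =>
    obtain ⟨g, hg, u, rfl⟩ := ihw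
    obtain ⟨g', hg', u', rfl⟩ := ihw'
    exact ⟨_, Subgroup.mul_mem _ hg hg', u * u', Equiv.Perm.sumCongr_mul _ _ _ _⟩
  | inv w hw ihw =>
    obtain ⟨g, hg, u, rfl⟩ := ihw
    exact ⟨_, Subgroup.inv_mem _ hg, u⁻¹, (Equiv.Perm.sumCongr_inv _ _).symm⟩

variable (J B : Equiv.Perm α)

lemma orbit_sum_inl (a : α) :
    (orbit (closure ({Equiv.Perm.sumCongr J s2, Equiv.Perm.sumCongr B s2} :
      Set (Equiv.Perm (α ⊕ Fin 2)))) (Sum.inl a : α ⊕ Fin 2) : Set (α ⊕ Fin 2))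
    = Sum.inl '' (orbit (closure ({J, B} : Set (Equiv.Perm α))) a) := by
  ext z
  constructor
  · rintro ⟨⟨g, hg⟩, rfl⟩
    obtain ⟨w, hw, u, rfl⟩ := sum_form J B g hg
    exact ⟨w a, ⟨⟨w, hw⟩, rfl⟩, rfl⟩
  · rintro ⟨b, ⟨⟨w, hw⟩, rfl⟩, rfl⟩
    obtain ⟨g, hg, u, rfl⟩ := sum_lift J B w hw
    exact ⟨⟨_, hg⟩, rfl⟩

lemma orbit_sum_inr (i : Fin 2) :
    (orbit (closure ({Equiv.Perm.sumCongr J s2, Equiv.Perm.sumCongr B s2} :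
      Set (Equiv.Perm (α ⊕ Fin 2)))) (Sum.inr i : α ⊕ Fin 2) : Set (α ⊕ Fin 2))
    = {Sum.inr 0, Sum.inr 1} := by
  ext z
  constructor
  · rintro ⟨⟨g, hg⟩, rfl⟩
    obtain ⟨w, hw, u, rfl⟩ := sum_form J B g hg
    show Sum.inr (u i) ∈ _
    rcases (by decide : ∀ j : Fin 2, j = 0 ∨ j = 1) (u i) with h | h <;> rw [h]
    · exact Or.inl rfl
    · exact Or.inr rfl
  · have hmem : (Equiv.Perm.sumCongr J s2 : Equiv.Perm (α ⊕ Fin 2)) ∈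
        closure ({Equiv.Perm.sumCongr J s2, Equiv.Perm.sumCongr B s2} :
          Set (Equiv.Perm (α ⊕ Fin 2))) := Subgroup.subset_closure (Or.inl rfl)
    rintro (rfl | rfl)
    · rcases (by decide : ∀ j : Fin 2, j = 0 ∨ j = 1) i with h | h <;> subst h
      · exact ⟨1, rfl⟩
      · exact ⟨⟨_, hmem⟩, by show Sum.inr (s2 1) = _; norm_num [s2]⟩
    · rcases (by decide : ∀ j : Fin 2, j = 0 ∨ j = 1) i with h | h <;> subst h
      · exact ⟨⟨_, hmem⟩, by show Sum.inr (s2 0) = _; norm_num [s2]⟩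
      · exact ⟨1, rfl⟩

lemma orbitSizes_sum [Fintype α] (J B : Equiv.Perm α) :
    orbitSizes (closure ({Equiv.Perm.sumCongr J s2, Equiv.Perm.sumCongr B s2} :
      Set (Equiv.Perm (α ⊕ Fin 2))))
    = 2 ::ₘ orbitSizes (closure ({J, B} : Set (Equiv.Perm α))) := by
  classical
  set G := closure ({Equiv.Perm.sumCongr J s2, Equiv.Perm.sumCongr B s2} :
    Set (Equiv.Perm (α ⊕ Fin 2))) with hG
  set H := closure ({J, B} : Set (Equiv.Perm α)) with hH
  letI : Fintype (Quotient (orbitRel G (α ⊕ Fin 2))) := Fintype.ofFinite _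
  letI : Fintype (Quotient (orbitRel H α)) := Fintype.ofFinite _
  -- the quotient equivalence
  have hwd : ∀ a b : α, (orbitRel H α).r a b →
      (orbitRel G (α ⊕ Fin 2)).r (Sum.inl a) (Sum.inl b) := by
    intro a b hab
    rw [orbitRel_apply] at *
    rw [orbit_sum_inl]
    exact Set.mem_image_of_mem _ hab
  let Qf : Option (Quotient (orbitRel H α)) → Quotient (orbitRel G (α ⊕ Fin 2)) :=
    fun o => o.elim ⟦Sum.inr 0⟧ (Quotient.map Sum.inl hwd)
  have hQf : Function.Bijective Qf := by
    constructor
    · intro o₁ o₂ h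
      match o₁, o₂ with
      | none, none => rfl
      | none, some q =>
        induction q using Quotient.inductionOn with
        | h a =>
          exfalso
          have h' : (Sum.inl a : α ⊕ Fin 2) ∈ orbit G (Sum.inr (0 : Fin 2)) :=
            orbitRel_apply.mp (Quotient.exact (h.symm))
          rw [hG, orbit_sum_inr] at h'
          rcases h' with h' | h' <;> simp at h'
      | some q, none =>
        induction q using Quotient.inductionOn with
        | h a =>
          exfalso
          have h' : (Sum.inl a : α ⊕ Fin 2) ∈ orbit G (Sum.inr (0 : Fin 2)) :=
            orbitRel_apply.mp (Quotient.exact h)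
          rw [hG, orbit_sum_inr] at h'
          rcases h' with h' | h' <;> simp at h'
      | some q₁, some q₂ =>
        induction q₁ using Quotient.inductionOn with
        | h a =>
        induction q₂ using Quotient.inductionOn with
        | h b =>
          congr 1
          have h' : (Sum.inl a : α ⊕ Fin 2) ∈ orbit G (Sum.inl b : α ⊕ Fin 2) :=
            orbitRel_apply.mp (Quotient.exact h)
          rw [hG, orbit_sum_inl] at h'
          obtain ⟨c, hc, hcc⟩ := h'
          have hca : c = a := Sum.inl_injective hcc
          subst hca
          exact Quotient.sound (orbitRel_apply.mpr hc)
    · intro q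
      induction q using Quotient.inductionOn with
      | h z =>
        rcases z with a | i
        · exact ⟨some ⟦a⟧, rfl⟩
        · refine ⟨none, Quotient.sound (orbitRel_apply.mpr ?_)⟩
          show (Sum.inr (0 : Fin 2) : α ⊕ Fin 2) ∈ orbit G (Sum.inr i)
          rw [hG, orbit_sum_inr]
          rcases (by decide : ∀ j : Fin 2, j = 0 ∨ j = 1) i with h | h <;> subst h
          · exact Or.inl rfl
          · exact Or.inl rfl
  let Q : Option (Quotient (orbitRel H α)) ≃ Quotient (orbitRel G (α ⊕ Fin 2)) :=
    Equiv.ofBijective Qf hQf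
  have key_none : Nat.card (orbit G (Q none).out) = 2 := by
    have h1 : Nat.card (orbit G ((⟦Sum.inr 0⟧ : Quotient (orbitRel G (α ⊕ Fin 2))).out))
        = Nat.card (orbit G (Sum.inr 0 : α ⊕ Fin 2)) :=
      card_orbit_congr (by rw [← orbitRel_apply]; exact Quotient.mk_out _)
    show Nat.card (orbit G ((⟦Sum.inr 0⟧ : Quotient (orbitRel G (α ⊕ Fin 2))).out)) = 2
    rw [h1, Nat.card_coe_set_eq, hG, orbit_sum_inr J B 0, Set.ncard_pair (by simp)]
  have key_some : ∀ q : Quotient (orbitRel H α),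
      Nat.card (orbit G (Q (some q)).out) = Nat.card (orbit H q.out) := by
    intro q
    induction q using Quotient.inductionOn with
    | h a =>
      have h1 : Q (some ⟦a⟧) = ⟦Sum.inl a⟧ := rfl
      rw [h1]
      have h2 : Nat.card (orbit G ((⟦Sum.inl a⟧ : Quotient (orbitRel G (α ⊕ Fin 2))).out))
          = Nat.card (orbit G (Sum.inl a : α ⊕ Fin 2)) :=
        card_orbit_congr (by rw [← orbitRel_apply]; exact Quotient.mk_out _)
      have h3 : Nat.card (orbit H ((⟦a⟧ : Quotient (orbitRel H α)).out))
          = Nat.card (orbit H a) :=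
        card_orbit_congr (by rw [← orbitRel_apply]; exact Quotient.mk_out _)
      rw [h2, h3, Nat.card_coe_set_eq, Nat.card_coe_set_eq, hG, orbit_sum_inl J B a,
        hH, Set.ncard_image_of_injective _ Sum.inl_injective]
  unfold orbitSizes
  calc (Finset.univ : Finset (Quotient (orbitRel G (α ⊕ Fin 2)))).val.map
        (fun q => Nat.card (orbit G q.out))
      = ((Finset.univ : Finset (Option (Quotient (orbitRel H α)))).map Q.toEmbedding).val.map
        (fun q => Nat.card (orbit G q.out)) := by rw [Finset.map_univ_equiv]
    _ = (Finset.univ : Finset (Option (Quotient (orbitRel H α)))).val.map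
        (fun o => Nat.card (orbit G (Q o).out)) := by
          rw [Finset.map_val, Multiset.map_map]; rfl
    _ = Nat.card (orbit G (Q none).out) ::ₘ
        (Finset.univ : Finset (Quotient (orbitRel H α))).val.map
          (fun q => Nat.card (orbit G (Q (some q)).out)) := by
          rw [univ_option]
          simp [Finset.insertNone, Multiset.map_map]
    _ = 2 ::ₘ (Finset.univ : Finset (Quotient (orbitRel H α))).val.map
          (fun q => Nat.card (orbit H q.out)) := by
          rw [key_none]
          congr 1
          exact Multiset.map_congr rfl (fun q _ => key_some q)

end SumDecomp
lemma sum_decomp [DecidableEq α] {g : Equiv.Perm (α ⊕ Fin 2)}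
    (hg2 : g * g = 1) (hgf : ∀ z, g z ≠ z) (h0 : g (Sum.inr 0) = Sum.inr 1) :
    ∃ B' : Equiv.Perm α, (B' * B' = 1 ∧ ∀ a, B' a ≠ a) ∧ g = Equiv.Perm.sumCongr B' s2 := by
  have happ : ∀ z, g (g z) = z := invol_apply_apply hg2
  have h1 : g (Sum.inr 1) = Sum.inr 0 := by rw [← h0, happ]
  have hleft : ∀ a : α, ∃ b, g (Sum.inl a) = Sum.inl b := by
    intro a
    rcases hz : g (Sum.inl a) with b | i
    · exact ⟨b, rfl⟩
    · exfalso
      rcases (by decide : ∀ j : Fin 2, j = 0 ∨ j = 1) i with rfl | rfl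
      · have := happ (Sum.inl a)
        rw [hz, h0] at this
        exact Sum.inr_ne_inl this
      · have := happ (Sum.inl a)
        rw [hz, h1] at this
        exact Sum.inr_ne_inl this
  choose f hf using hleft
  have hff : ∀ a, f (f a) = a := fun a => Sum.inl_injective (by rw [← hf, ← hf, happ])
  refine ⟨⟨f, f, hff, hff⟩, ⟨Equiv.ext fun a => hff a, fun a ha =>
    hgf (Sum.inl a) (by rw [hf]; exact congrArg Sum.inl ha)⟩, ?_⟩
  ext z
  rcases z with a | i
  · rw [hf]; rfl
  · rcases (by decide : ∀ j : Fin 2, j = 0 ∨ j = 1) i with rfl | rfl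
    · rw [h0]; rfl
    · rw [h1]; rfl

lemma pcHom_props {N : ℕ} (e : α ≃ Fin N) {g : Equiv.Perm α}
    (hg : g * g = 1 ∧ ∀ z, g z ≠ z) :
    pcHom e g * pcHom e g = 1 ∧ ∀ z, pcHom e g z ≠ z := by
  constructor
  · rw [← MonoidHom.map_mul, hg.1, MonoidHom.map_one]
  · intro z h
    have : pcHom e g (e (e.symm z)) = z := by rw [e.apply_symm_apply]; exact h
    rw [pcHom_apply] at this
    exact hg.2 (e.symm z) (e.injective (by rw [this, e.apply_symm_apply]))

lemma sumCongr_props {g : Equiv.Perm α} (hg : g * g = 1 ∧ ∀ z, g z ≠ z) :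
    Equiv.Perm.sumCongr g s2 * Equiv.Perm.sumCongr g s2 = 1 ∧
      ∀ z, Equiv.Perm.sumCongr g s2 z ≠ z := by
  constructor
  · rw [Equiv.Perm.sumCongr_mul, hg.1, s2_props.1, Equiv.Perm.sumCongr_one]
  · rintro (a | i) h
    · exact hg.2 a (Sum.inl_injective h)
    · exact s2_props.2 i (Sum.inr_injective h)

lemma pcHom_pcHom_symm (e : α ≃ β) (h : Equiv.Perm β) : pcHom e (pcHom e.symm h) = h := by
  ext b; simp [pcHom]

lemma card_edge_small (n : ℕ) (hn : 2 ≤ n) (J' : PerfMatching (2 * (n - 1)))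
    (m' : Multiset ℕ) :
    ∃ (A0 : PerfMatching (2 * n)) (x0 y0 : Fin (2 * n)), x0 ≠ y0 ∧ A0.1 x0 = y0 ∧
      Nat.card {B : PerfMatching (2 * n) // dMatch A0.1 B.1 = 2 ::ₘ m' ∧ B.1 x0 = y0}
        = Nat.card {B' : PerfMatching (2 * (n - 1)) // dMatch J'.1 B'.1 = m'} := by
  have hE : 2 * (n - 1) + 2 = 2 * n := by omega
  let E : Fin (2 * (n - 1)) ⊕ Fin 2 ≃ Fin (2 * n) := finSumFinEquiv.trans (finCongr hE)
  let A0 : PerfMatching (2 * n) :=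
    ⟨pcHom E (Equiv.Perm.sumCongr J'.1 s2), pcHom_props E (sumCongr_props J'.2)⟩
  let x0 : Fin (2 * n) := E (Sum.inr 0)
  let y0 : Fin (2 * n) := E (Sum.inr 1)
  have hx0y0 : x0 ≠ y0 := fun h => by simpa using E.injective h
  have hs20 : s2 0 = 1 := by decide
  have hs21 : s2 1 = 0 := by decide
  have hA0 : A0.1 x0 = y0 := by
    show pcHom E (Equiv.Perm.sumCongr J'.1 s2) (E (Sum.inr 0)) = E (Sum.inr 1)
    rw [pcHom_apply]
    congr 1
  have hdm : ∀ B' : Equiv.Perm (Fin (2 * (n - 1))),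
      dMatch A0.1 (pcHom E (Equiv.Perm.sumCongr B' s2)) = 2 ::ₘ dMatch J'.1 B' := by
    intro B'
    show orbitSizes (closure {E.permCongr (Equiv.Perm.sumCongr J'.1 s2),
      E.permCongr (Equiv.Perm.sumCongr B' s2)}) = _
    rw [orbitSizes_closure_pair E]
    exact orbitSizes_sum J'.1 B'
  refine ⟨A0, x0, y0, hx0y0, hA0, ?_⟩
  refine (Nat.card_congr (Equiv.ofBijective (fun B' =>
    (⟨⟨pcHom E (Equiv.Perm.sumCongr B'.1.1 s2), pcHom_props E (sumCongr_props B'.1.2)⟩,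
      by rw [hdm B'.1.1, B'.2], by
        show pcHom E (Equiv.Perm.sumCongr B'.1.1 s2) (E (Sum.inr 0)) = E (Sum.inr 1)
        rw [pcHom_apply]
        congr 1⟩ :
      {B : PerfMatching (2 * n) // dMatch A0.1 B.1 = 2 ::ₘ m' ∧ B.1 x0 = y0})) ⟨?_, ?_⟩)).symm
  · -- injective
    rintro ⟨⟨B1, hB1⟩, hc1⟩ ⟨⟨B2, hB2⟩, hc2⟩ h
    have h' : pcHom E (Equiv.Perm.sumCongr B1 s2) = pcHom E (Equiv.Perm.sumCongr B2 s2) :=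
      congrArg (fun z => z.1.1) h
    have h'' : Equiv.Perm.sumCongr B1 s2 = Equiv.Perm.sumCongr B2 s2 :=
      (Equiv.permCongr E).injective h'
    have hBB : B1 = B2 := Equiv.ext fun a => by
      have h3 := congrArg (fun g : Equiv.Perm _ => g (Sum.inl a)) h''
      simp only [Equiv.Perm.sumCongr_apply, Sum.map_inl] at h3
      exact Sum.inl_injective h3
    subst hBB
    rfl
  · -- surjective
    rintro ⟨⟨B, hB⟩, hd, hx⟩
    have hg0 : pcHom E.symm B (Sum.inr 0) = Sum.inr 1 := by
      have h1 : (Sum.inr (0 : Fin 2) : Fin (2 * (n - 1)) ⊕ Fin 2) = E.symm x0 := by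
        simp [x0]
      rw [h1, pcHom_apply E.symm B x0, hx]
      simp [y0]
    obtain ⟨B', hB'p, hB'eq⟩ := sum_decomp
      (by rw [← MonoidHom.map_mul, hB.1, MonoidHom.map_one])
      (fun z => by
        intro h
        have h2 := congrArg (fun w => E w) h
        have h3 : pcHom E.symm B z = E.symm (B (E z)) := by
          have := pcHom_apply E.symm B (E z)
          rwa [E.symm_apply_apply] at this
        rw [h3] at h2
        simp only [Equiv.apply_symm_apply] at h2
        exact hB.2 (E z) h2) hg0
    have hBeq : B = pcHom E (Equiv.Perm.sumCongr B' s2) := by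
      rw [← hB'eq, pcHom_pcHom_symm]
    have hcond : dMatch J'.1 B' = m' := by
      have h4 : dMatch A0.1 (pcHom E (Equiv.Perm.sumCongr B' s2)) = 2 ::ₘ m' := by
        rw [← hBeq]; exact hd
      rw [hdm B'] at h4
      exact (Multiset.cons_inj_right 2).mp h4
    refine ⟨⟨⟨B', hB'p⟩, hcond⟩, ?_⟩
    apply Subtype.ext
    apply Subtype.ext
    exact hBeq.symm
lemma nat_card_subtype {γ : Type*} [Fintype γ] (pr : γ → Prop) [DecidablePred pr] :
    Nat.card {x // pr x} = (Finset.univ.filter pr).card := by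
  rw [Nat.card_eq_fintype_card, Fintype.card_subtype]

lemma exists_nonedge (n : ℕ) (hn : 2 ≤ n) (A : PerfMatching (2 * n)) :
    ∃ x y : Fin (2 * n), x ≠ y ∧ A.1 x ≠ y := by
  classical
  set x0 : Fin (2 * n) := ⟨0, by omega⟩ with hx0
  have hex : ∃ y, y ∉ ({x0, A.1 x0} : Finset (Fin (2 * n))) := by
    by_contra h
    push_neg at h
    have huniv : ({x0, A.1 x0} : Finset (Fin (2 * n))) = Finset.univ :=
      Finset.eq_univ_iff_forall.mpr h
    have h1 : (Finset.univ : Finset (Fin (2 * n))).card ≤ 2 := by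
      rw [← huniv]
      exact (Finset.card_insert_le _ _).trans (by simp)
    rw [Finset.card_univ, Fintype.card_fin] at h1
    omega
  obtain ⟨y, hy⟩ := hex
  simp only [Finset.mem_insert, Finset.mem_singleton, not_or] at hy
  exact ⟨x0, y, fun h => hy.1 h.symm, fun h => hy.2 h.symm⟩

lemma double_count (n : ℕ) (hn : 2 ≤ n) (A : PerfMatching (2 * n)) (m : Multiset ℕ)
    (p q : ℕ)
    (hp : ∀ x y : Fin (2 * n), x ≠ y → A.1 x = y →
      Nat.card {B : PerfMatching (2 * n) // dMatch A.1 B.1 = m ∧ B.1 x = y} = p)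
    (hq : ∀ x y : Fin (2 * n), x ≠ y → A.1 x ≠ y →
      Nat.card {B : PerfMatching (2 * n) // dMatch A.1 B.1 = m ∧ B.1 x = y} = q) :
    Nat.card {B : PerfMatching (2 * n) // dMatch A.1 B.1 = m} + 2 * q
      = p + (2 * n) * q := by
  classical
  set Ω : Finset (PerfMatching (2 * n)) :=
    Finset.univ.filter (fun B => dMatch A.1 B.1 = m) with hΩ
  set D : Finset (Fin (2 * n) × Fin (2 * n)) := Finset.univ.filter (fun z => ¬ z.1 = z.2) with hD
  have graph_card : ∀ C : PerfMatching (2 * n),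
      (D.filter (fun z => C.1 z.1 = z.2)).card = 2 * n := by
    intro C
    have himg : D.filter (fun z => C.1 z.1 = z.2)
        = Finset.univ.image (fun x : Fin (2 * n) => (x, C.1 x)) := by
      rw [hD, Finset.filter_filter]
      ext z
      simp only [Finset.mem_filter, Finset.mem_univ, true_and, Finset.mem_image]
      constructor
      · rintro ⟨h1, h2⟩
        exact ⟨z.1, by rw [h2]⟩
      · rintro ⟨x, rfl⟩
        exact ⟨fun h => C.2.2 x h.symm, rfl⟩
    rw [himg, Finset.card_image_of_injective _ (fun a b h => congrArg Prod.fst h),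
      Finset.card_univ, Fintype.card_fin]
  have hswap : ∑ z ∈ D, (Ω.filter (fun B => B.1 z.1 = z.2)).card
      = ∑ B ∈ Ω, (D.filter (fun z => B.1 z.1 = z.2)).card := by
    simp only [Finset.card_filter]
    rw [Finset.sum_comm]
  have hrhs : ∑ B ∈ Ω, (D.filter (fun z => B.1 z.1 = z.2)).card = Ω.card * (2 * n) := by
    rw [Finset.sum_congr rfl (fun B _ => graph_card B), Finset.sum_const, smul_eq_mul]
  have hsub : ∀ z : Fin (2 * n) × Fin (2 * n),
      (Ω.filter (fun B => B.1 z.1 = z.2)).card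
        = Nat.card {B : PerfMatching (2 * n) // dMatch A.1 B.1 = m ∧ B.1 z.1 = z.2} := by
    intro z
    rw [nat_card_subtype, hΩ, Finset.filter_filter]
  have hDcard : D.card + 2 * n = (2 * n) * (2 * n) := by
    have hdiag : (Finset.univ.filter (fun z : Fin (2 * n) × Fin (2 * n) => z.1 = z.2)).card = 2 * n := by
      have himg : Finset.univ.filter (fun z : Fin (2 * n) × Fin (2 * n) => z.1 = z.2)
          = Finset.univ.image (fun x : Fin (2 * n) => (x, x)) := by
        ext z
        simp only [Finset.mem_filter, Finset.mem_univ, true_and, Finset.mem_image]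
        constructor
        · intro h1
          refine ⟨z.1, ?_⟩
          have : z = (z.1, z.2) := rfl
          rw [this, h1]
        · rintro ⟨x, rfl⟩
          rfl
      rw [himg, Finset.card_image_of_injective _ (fun a b h => congrArg Prod.fst h),
        Finset.card_univ, Fintype.card_fin]
    have := Finset.card_filter_add_card_filter_not
      (s := (Finset.univ : Finset (Fin (2 * n) × Fin (2 * n)))) (p := fun z => z.1 = z.2)
    rw [hdiag] at this
    rw [hD]
    have huc : (Finset.univ : Finset (Fin (2 * n) × Fin (2 * n))).card = (2 * n) * (2 * n) := by
      rw [Finset.card_univ, Fintype.card_prod, Fintype.card_fin]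
    omega
  have hedge : (D.filter (fun z => A.1 z.1 = z.2)).card = 2 * n := graph_card A
  have hnedge : (D.filter (fun z => ¬ A.1 z.1 = z.2)).card + 2 * n = D.card := by
    have := Finset.card_filter_add_card_filter_not
      (s := D) (p := fun z => A.1 z.1 = z.2)
    omega
  have hlhs : ∑ z ∈ D, (Ω.filter (fun B => B.1 z.1 = z.2)).card
      = (2 * n) * p + (D.filter (fun z => ¬ A.1 z.1 = z.2)).card * q := by
    rw [← Finset.sum_filter_add_sum_filter_not D (fun z => A.1 z.1 = z.2)]
    have h1 : ∑ z ∈ D.filter (fun z => A.1 z.1 = z.2),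
        (Ω.filter (fun B => B.1 z.1 = z.2)).card = (2 * n) * p := by
      rw [Finset.sum_congr rfl (fun z hz => ?_), Finset.sum_const, smul_eq_mul, hedge]
      rw [hsub]
      rw [hD, Finset.filter_filter] at hz
      simp only [Finset.mem_filter, Finset.mem_univ, true_and] at hz
      exact hp z.1 z.2 hz.1 hz.2
    have h2 : ∑ z ∈ D.filter (fun z => ¬ A.1 z.1 = z.2),
        (Ω.filter (fun B => B.1 z.1 = z.2)).card
        = (D.filter (fun z => ¬ A.1 z.1 = z.2)).card * q := by
      rw [Finset.sum_congr rfl (fun z hz => ?_), Finset.sum_const, smul_eq_mul]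
      rw [hsub]
      rw [hD, Finset.filter_filter] at hz
      simp only [Finset.mem_filter, Finset.mem_univ, true_and] at hz
      exact hq z.1 z.2 hz.1 hz.2
    rw [h1, h2]
  have hΩcard : Nat.card {B : PerfMatching (2 * n) // dMatch A.1 B.1 = m} = Ω.card := by
    rw [nat_card_subtype, hΩ]
  rw [hΩcard]
  have hmain : Ω.card * (2 * n) = (2 * n) * p + (D.filter (fun z => ¬ A.1 z.1 = z.2)).card * q := by
    rw [← hrhs, ← hswap, hlhs]
  have hNpos : 0 < 2 * n := by omega
  have hfin : (2 * n) * (Ω.card + 2 * q) = (2 * n) * (p + (2 * n) * q) := by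
    have hD2 : (D.filter (fun z => ¬ A.1 z.1 = z.2)).card + 2 * (2 * n)
        = (2 * n) * (2 * n) := by omega
    calc (2 * n) * (Ω.card + 2 * q) = Ω.card * (2 * n) + 2 * (2 * n) * q := by ring
      _ = (2 * n) * p + (D.filter (fun z => ¬ A.1 z.1 = z.2)).card * q + 2 * (2 * n) * q := by
          rw [hmain]
      _ = (2 * n) * p + ((D.filter (fun z => ¬ A.1 z.1 = z.2)).card + 2 * (2 * n)) * q := by
          ring
      _ = (2 * n) * p + ((2 * n) * (2 * n)) * q := by rw [hD2]
      _ = (2 * n) * (p + (2 * n) * q) := by ring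
  have := Nat.eq_of_mul_eq_mul_left hNpos hfin
  omega
end GZ

open GZ

/-- The vector `v = Σ_A A − (2n−1)·Σ_{A ∋ e} A` is a simultaneous eigenvector of all
the orbital basis elements `N_{2μ}`, with the indicated eigenvalues: writing `P(2μ)`
for the number of perfect matchings `B` of `Fin (2n)` with `d(J,B) = 2μ` (independent
of the perfect matching `J`), the eigenvalue of `N_{2μ}` is `P(2μ)/(−(2n−2))` if `1` is
not a part of `μ`, and `(P(2μ) − (2n−1)·P'(2μ'))/(−(2n−2))` if `1` is a part of `μ`,
where `μ' ⊢ n−1` is `μ` with one part `1` removed and `P'` is the corresponding count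
for perfect matchings of `Fin (2n−2)`. -/
theorem gzVec_eigenvector (n : ℕ) (hn : 2 ≤ n) (x y : Fin (2 * n)) (hxy : x ≠ y)
    (μ : Nat.Partition n) (J : PerfMatching (2 * n)) :
    (1 ∉ μ.parts →
      (Nmat n μ).mulVec (gzVec n x y) =
        ((Nat.card {B : PerfMatching (2 * n) // dMatch J.1 B.1 = twice μ.parts} : ℂ) /
            (-(2 * (n : ℂ) - 2))) • gzVec n x y) ∧
    (1 ∈ μ.parts →
      ∀ (J' : PerfMatching (2 * (n - 1))) (μ' : Nat.Partition (n - 1)),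
        μ'.parts = μ.parts.erase 1 →
        (Nmat n μ).mulVec (gzVec n x y) =
          (((Nat.card {B : PerfMatching (2 * n) // dMatch J.1 B.1 = twice μ.parts} : ℂ) -
              (2 * (n : ℂ) - 1) *
                (Nat.card {B' : PerfMatching (2 * (n - 1)) //
                  dMatch J'.1 B'.1 = twice μ'.parts} : ℂ)) /
            (-(2 * (n : ℂ) - 2))) • gzVec n x y) := by
  classical
  set m := twice μ.parts with hm0
  set xp : Fin (2 * n) := ⟨0, by omega⟩ with hxp
  set yp : Fin (2 * n) := J.1 xp with hyp
  have hxpyp : xp ≠ yp := fun h => J.2.2 xp h.symm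
  obtain ⟨xq, yq, hxqyq, hnq⟩ := exists_nonedge n hn J
  set p := Nat.card {B : PerfMatching (2 * n) // dMatch J.1 B.1 = m ∧ B.1 xp = yp} with hpdef
  set q := Nat.card {B : PerfMatching (2 * n) // dMatch J.1 B.1 = m ∧ B.1 xq = yq} with hqdef
  set P := Nat.card {B : PerfMatching (2 * n) // dMatch J.1 B.1 = m} with hPdef
  have huni_p : ∀ (A : PerfMatching (2 * n)) (a b : Fin (2 * n)), a ≠ b → A.1 a = b →
      Nat.card {B : PerfMatching (2 * n) // dMatch A.1 B.1 = m ∧ B.1 a = b} = p :=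
    fun A a b hab hAab =>
      card_cond_conj hab hxpyp (iff_of_true hAab rfl) m
  have huni_q : ∀ (A : PerfMatching (2 * n)) (a b : Fin (2 * n)), a ≠ b → A.1 a ≠ b →
      Nat.card {B : PerfMatching (2 * n) // dMatch A.1 B.1 = m ∧ B.1 a = b} = q :=
    fun A a b hab hAab =>
      card_cond_conj hab hxqyq (iff_of_false hAab hnq) m
  have hPA : ∀ A : PerfMatching (2 * n),
      Nat.card {B : PerfMatching (2 * n) // dMatch A.1 B.1 = m} = P :=
    fun A => card_d_conj A J m
  have hPQ : P + 2 * q = p + (2 * n) * q :=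
    double_count n hn J m p q (huni_p J) (huni_q J)
  -- the matrix-vector product, computed entrywise
  have hmv : ∀ A : PerfMatching (2 * n),
      (Nmat n μ).mulVec (gzVec n x y) A
        = (P : ℂ) - (2 * (n : ℂ) - 1) * ((if A.1 x = y then p else q : ℕ) : ℂ) := by
    intro A
    have hAc : Nat.card {B : PerfMatching (2 * n) // dMatch A.1 B.1 = m ∧ B.1 x = y}
        = (if A.1 x = y then p else q) := by
      split_ifs with h
      · exact huni_p A x y hxy h
      · exact huni_q A x y hxy h
    have hterm : ∀ B : PerfMatching (2 * n),
        (if dMatch A.1 B.1 = m then (1 : ℂ) else 0) *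
          (if B.1 x = y then 1 - (2 * (n : ℂ) - 1) else 1)
        = (if dMatch A.1 B.1 = m then (1 : ℂ) else 0)
          - (2 * (n : ℂ) - 1) * (if dMatch A.1 B.1 = m ∧ B.1 x = y then (1 : ℂ) else 0) := by
      intro B
      by_cases h1 : dMatch A.1 B.1 = m <;> by_cases h2 : B.1 x = y <;>
        simp [h1, h2] <;> ring
    show ∑ B : PerfMatching (2 * n), (Nmat n μ) A B * gzVec n x y B = _
    simp only [Nmat, Matrix.of_apply, gzVec, hm0]
    rw [Finset.sum_congr rfl (fun B _ => hterm B), Finset.sum_sub_distrib, ← Finset.mul_sum,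
      Finset.sum_boole, Finset.sum_boole]
    have hc1 : (Finset.univ.filter
        (fun B : PerfMatching (2 * n) => dMatch A.1 B.1 = twice μ.parts)).card = P := by
      rw [← nat_card_subtype]
      exact hPA A
    have hc2 : (Finset.univ.filter (fun B : PerfMatching (2 * n) =>
        dMatch A.1 B.1 = twice μ.parts ∧ B.1 x = y)).card = (if A.1 x = y then p else q) := by
      rw [← nat_card_subtype]
      exact hAc
    rw [hc1, hc2]
  have hne : (2 * (n : ℂ) - 2) ≠ 0 := by
    intro h
    have h2 : (2 : ℂ) * (n : ℂ) = 2 := by linear_combination h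
    have h3 : ((n : ℂ)) = 1 := by linear_combination h2 / 2
    have : (n : ℕ) = 1 := by exact_mod_cast h3
    omega
  constructor
  · -- 1 ∉ μ.parts
    intro h1not
    have hp0 : p = 0 := by
      have hempty : IsEmpty {B : PerfMatching (2 * n) // dMatch J.1 B.1 = m ∧ B.1 xp = yp} := by
        constructor
        rintro ⟨B, hd, hBe⟩
        have h2m : 2 ∈ dMatch J.1 B.1 := two_mem_dMatch J.2.1 B.2.1 hxpyp rfl hBe
        rw [hd, hm0] at h2m
        obtain ⟨i, hi, hii⟩ := Multiset.mem_map.mp h2m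
        have hi1 : i = 1 := by omega
        exact h1not (hi1 ▸ hi)
      rw [hpdef]
      exact Nat.card_of_isEmpty
    have hPc : (P : ℂ) = (2 * (n : ℂ) - 2) * (q : ℂ) := by
      have : (P : ℂ) + 2 * q = (p : ℂ) + (2 * n) * q := by exact_mod_cast hPQ
      rw [hp0] at this
      push_cast at this ⊢
      linear_combination this
    have hpc : (p : ℂ) = 0 := by rw [hp0]; norm_num
    have hne' : (-(2 * (n : ℂ) - 2)) ≠ 0 := neg_ne_zero.mpr hne
    funext A
    rw [hmv A, Pi.smul_apply, smul_eq_mul]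
    show _ = _ * gzVec n x y A
    unfold gzVec
    by_cases hA : A.1 x = y <;> simp only [hA, if_true, if_false]
    · rw [div_mul_eq_mul_div, eq_div_iff hne', hpc, hPc]
      ring
    · rw [div_mul_eq_mul_div, eq_div_iff hne', hPc]
      ring
  · -- 1 ∈ μ.parts
    intro h1mem J' μ' hμ'
    set P' := Nat.card {B' : PerfMatching (2 * (n - 1)) // dMatch J'.1 B'.1 = twice μ'.parts}
      with hP'def
    have hm2 : m = 2 ::ₘ twice μ'.parts := by
      rw [hm0, hμ']
      unfold twice
      conv_lhs => rw [← Multiset.cons_erase h1mem]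
      rw [Multiset.map_cons]
    have hpP' : p = P' := by
      obtain ⟨A0, x0, y0, h01, h02, h03⟩ := card_edge_small n hn J' (twice μ'.parts)
      have hA0p : Nat.card {B : PerfMatching (2 * n) //
          dMatch A0.1 B.1 = m ∧ B.1 x0 = y0} = p := huni_p A0 x0 y0 h01 h02
      rw [← hA0p, hP'def, ← h03, hm2]
    have hPc : (P : ℂ) = (P' : ℂ) + (2 * (n : ℂ) - 2) * (q : ℂ) := by
      have : (P : ℂ) + 2 * q = (p : ℂ) + (2 * n) * q := by exact_mod_cast hPQ
      rw [hpP'] at this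
      push_cast at this ⊢
      linear_combination this
    have hpc2 : (p : ℂ) = (P' : ℂ) := by exact_mod_cast congrArg (Nat.cast : ℕ → ℂ) hpP'
    have hne' : (-(2 * (n : ℂ) - 2)) ≠ 0 := neg_ne_zero.mpr hne
    funext A
    rw [hmv A, Pi.smul_apply, smul_eq_mul]
    show _ = _ * gzVec n x y A
    unfold gzVec
    by_cases hA : A.1 x = y <;> simp only [hA, if_true, if_false]
    · rw [div_mul_eq_mul_div, eq_div_iff hne', hpc2]
      ring
    · rw [div_mul_eq_mul_div, eq_div_iff hne', hPc]
      ring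
end
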